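/- Let μ be a strong limit cardinal of cofinality ℵ₀ and let H be an ℵ₀-indecomposable locally finite group of cardinality < μ. Suppose there exist an index set I of cardinality ≤ μ and a family ⟨G_α : α ∈ I⟩ of locally finite groups of cardinality μ, each containing H as a subgroup, such that every locally finite group G of cardinality μ containing H embeds into some G_α over H. Then there exist an index set J of cardinality ≤ μ and a family ⟨G'_α : α ∈ J⟩ of locally finite groups of cardinality μ, each containing H as a subgroup, such that: (b) every locally finite group G of cardinality μ containing H embeds into some G'_α over H; (c) for distinct α₁, α₂ ∈ J, the groups G'_{α₁} and G'_{α₂} cannot be amalgamated over H, i.e. there is no locally finite group G containing H together with embeddings of G'_{α₁} and of G'_{α₂} into G over H; (d) for each α ∈ J, the pair (G'_α, H) is a universal (μ,<μ)-amalgamation base. -/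

import Mathlib

universe u
open Cardinal

/-- A group is locally finite if every finitely generated subgroup is finite. -/
def LocallyFiniteGroup (G : Type u) [Group G] : Prop :=
  ∀ s : Finset G, Set.Finite ((Subgroup.closure (s : Set G) : Subgroup G) : Set G)

/-- A group `G` is `θ`-indecomposable when every `⊆`-increasing sequence
`⟨M_i : i < θ⟩` of subgroups of `G` with union `G` contains `G` as a member. -/
def GroupIndecomp (θ : Cardinal.{u}) (G : Type u) [Group G] : Prop :=
  ∀ M : θ.ord.ToType → Subgroup G, Monotone M → (⨆ i, M i) = ⊤ → ∃ i, M i = ⊤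

/-- `G` is a universal locally finite group of cardinality `μ`. -/
def UniversalLF (μ : Cardinal.{u}) (G : Type u) [Group G] : Prop :=
  LocallyFiniteGroup G ∧ #G = μ ∧
    ∀ (H : Type u) (_ : Group H), LocallyFiniteGroup H → #H = μ →
      ∃ f : H →* G, Function.Injective f

/-- The pair `(G, H)` (with `H` embedded in `G` via `e`) is a universal
`(μ, <μ)`-amalgamation base: every locally finite group `G'` of cardinality `μ`
containing `G` embeds into `G` over `H`. -/
def UnivAmalgBase (μ : Cardinal.{u}) (H G : Type u) [Group H] [Group G] (e : H →* G) : Prop :=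
  ∀ (G' : Type u) (_ : Group G'), LocallyFiniteGroup G' → #G' = μ →
    ∀ g : G →* G', Function.Injective g →
      ∃ f : G' →* G, Function.Injective f ∧ f.comp (g.comp e) = e

open Function Set

theorem lf_finite_closure {G : Type u} [Group G] (hG : LocallyFiniteGroup G) {s : Set G}
    (hs : s.Finite) : Set.Finite ((Subgroup.closure s : Subgroup G) : Set G) := by
  classical
  have := hG hs.toFinset
  rwa [Set.Finite.coe_toFinset] at this

theorem lf_of_injective {A B : Type u} [Group A] [Group B] (f : A →* B) (hf : Injective f)
    (hB : LocallyFiniteGroup B) : LocallyFiniteGroup A := by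
  intro s
  have h1 : ((Subgroup.closure (s : Set A)).map f : Set B)
      = (Subgroup.closure (f '' (s : Set A)) : Set B) := by
    rw [MonoidHom.map_closure]
  have h2 := lf_finite_closure hB ((s.finite_toSet).image f)
  rw [← h1] at h2
  have h3 : f '' ((Subgroup.closure (s : Set A)) : Set A)
      = ((Subgroup.closure (s : Set A)).map f : Set B) := by
    simp [Subgroup.coe_map]
  rw [← h3] at h2
  exact Set.Finite.of_finite_image h2 hf.injOn

theorem lf_subgroup {W : Type u} [Group W] (h : LocallyFiniteGroup W) (S : Subgroup W) :
    LocallyFiniteGroup ↥S :=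
  lf_of_injective S.subtype Subtype.val_injective h

theorem lf_of_equiv {A B : Type u} [Group A] [Group B] (f : A ≃* B)
    (hB : LocallyFiniteGroup B) : LocallyFiniteGroup A :=
  lf_of_injective f.toMonoidHom f.injective hB

theorem mk_closure_le {W : Type u} [Group W] (s : Set W) :
    #(Subgroup.closure s) ≤ max #s ℵ₀ := by
  have h1 : (FreeGroup.lift (Subtype.val : s → W)).range = Subgroup.closure s := by
    rw [FreeGroup.range_lift_eq_closure, Subtype.range_val]
  have h2 : #(Subgroup.closure s) ≤ #(FreeGroup s) := by
    rw [← h1]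
    exact mk_le_of_surjective (MonoidHom.rangeRestrict_surjective _)
  refine h2.trans ?_
  have h3 : #(FreeGroup s) ≤ #(List (s × Bool)) :=
    mk_le_of_surjective (f := FreeGroup.mk) (fun x => by
      rcases Quot.exists_rep x with ⟨L, hL⟩
      exact ⟨L, by rw [← hL]; rfl⟩)
  refine h3.trans ?_
  rcases isEmpty_or_nonempty (s × Bool) with h | h
  · exact le_trans (Cardinal.mk_le_aleph0) (le_max_right _ _)
  · rw [mk_list_eq_max_mk_aleph0]
    apply max_le _ (le_max_right _ _)
    have hm : ℵ₀ ≤ max #s ℵ₀ := le_max_right _ _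
    have : #(s × Bool) = #s * 2 := by simp [Cardinal.mk_prod, Cardinal.mk_bool]
    rw [this]
    have h2a : (2:Cardinal) ≤ ℵ₀ := by
      exact_mod_cast (Cardinal.nat_lt_aleph0 2).le
    calc #s * 2 ≤ max #s ℵ₀ * max #s ℵ₀ :=
          mul_le_mul' (le_max_left _ _) (h2a.trans hm)
      _ = max #s ℵ₀ := Cardinal.mul_eq_self hm

/-- A partial group structure on a subset of `X`. -/
structure PG (X : Type u) : Type u where
  car : Set X
  mul : X → X → X
  one : X
  inv : X → X
  one_mem : one ∈ car
  mul_mem : ∀ x ∈ car, ∀ y ∈ car, mul x y ∈ car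
  inv_mem : ∀ x ∈ car, inv x ∈ car
  assoc : ∀ x ∈ car, ∀ y ∈ car, ∀ z ∈ car, mul (mul x y) z = mul x (mul y z)
  one_mul : ∀ x ∈ car, mul one x = x
  inv_mul : ∀ x ∈ car, mul (inv x) x = one

namespace PG
variable {X : Type u}

instance grp (p : PG X) : Group ↥p.car :=
  letI : Mul ↥p.car := ⟨fun a b => ⟨p.mul a b, p.mul_mem _ a.2 _ b.2⟩⟩
  letI : One ↥p.car := ⟨⟨p.one, p.one_mem⟩⟩
  letI : Inv ↥p.car := ⟨fun a => ⟨p.inv a, p.inv_mem _ a.2⟩⟩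
  Group.ofLeftAxioms
    (fun a b c => Subtype.ext (p.assoc _ a.2 _ b.2 _ c.2))
    (fun a => Subtype.ext (p.one_mul _ a.2))
    (fun a => Subtype.ext (p.inv_mul _ a.2))

@[simp] theorem val_mul (p : PG X) (a b : ↥p.car) : ((a * b : ↥p.car) : X) = p.mul a b := rfl
@[simp] theorem val_one (p : PG X) : ((1 : ↥p.car) : X) = p.one := rfl
@[simp] theorem val_inv (p : PG X) (a : ↥p.car) : ((a⁻¹ : ↥p.car) : X) = p.inv a := rfl

/-- Extension of partial groups. -/
def Le (p q : PG X) : Prop :=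
  p.car ⊆ q.car ∧ ∀ x ∈ p.car, ∀ y ∈ p.car, p.mul x y = q.mul x y

theorem Le.refl (p : PG X) : p.Le p := ⟨subset_rfl, fun _ _ _ _ => rfl⟩

theorem Le.trans {p q r : PG X} (h1 : p.Le q) (h2 : q.Le r) : p.Le r :=
  ⟨h1.1.trans h2.1, fun x hx y hy => (h1.2 x hx y hy).trans (h2.2 x (h1.1 hx) y (h1.1 hy))⟩

theorem Le.one_eq {p q : PG X} (h : p.Le q) : p.one = q.one := by
  have h1 : (⟨p.one, h.1 p.one_mem⟩ * ⟨p.one, h.1 p.one_mem⟩ : ↥q.car)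
      = (⟨p.one, h.1 p.one_mem⟩ : ↥q.car) := by
    apply Subtype.ext
    simp only [val_mul]
    rw [← h.2 _ p.one_mem _ p.one_mem]
    exact p.one_mul _ p.one_mem
  have := mul_eq_left.mp h1
  simpa using congrArg Subtype.val this

theorem Le.inv_eq {p q : PG X} (h : p.Le q) {x : X} (hx : x ∈ p.car) :
    p.inv x = q.inv x := by
  have h1 : (⟨p.inv x, h.1 (p.inv_mem _ hx)⟩ * ⟨x, h.1 hx⟩ : ↥q.car) = 1 := by
    apply Subtype.ext
    simp only [val_mul, val_one]
    rw [← h.2 _ (p.inv_mem _ hx) _ hx, p.inv_mul _ hx, h.one_eq]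
  have h2 := eq_inv_of_mul_eq_one_left h1
  have := congrArg Subtype.val h2
  simpa using this

/-- The inclusion homomorphism of an extension. -/
def inclHom {p q : PG X} (h : p.Le q) : ↥p.car →* ↥q.car where
  toFun := fun a => ⟨a.1, h.1 a.2⟩
  map_one' := Subtype.ext h.one_eq
  map_mul' := fun a b => Subtype.ext (h.2 _ a.2 _ b.2)

theorem inclHom_injective {p q : PG X} (h : p.Le q) : Injective (inclHom h) :=
  fun a b hab => Subtype.ext (by have := congrArg Subtype.val hab; exact this)

@[simp] theorem inclHom_val {p q : PG X} (h : p.Le q) (a : ↥p.car) :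
    ((inclHom h a : ↥q.car) : X) = (a : X) := rfl

variable {ι : Type u}

open Classical in
noncomputable def cmul (g : ι → PG X) (x y : X) : X :=
  if h : ∃ i, x ∈ (g i).car ∧ y ∈ (g i).car then (g h.choose).mul x y else x

open Classical in
noncomputable def cinv (g : ι → PG X) (x : X) : X :=
  if h : ∃ i, x ∈ (g i).car then (g h.choose).inv x else x

theorem cmul_eq {g : ι → PG X} (hch : ∀ i j, (g i).Le (g j) ∨ (g j).Le (g i))
    {x y : X} (i : ι) (hx : x ∈ (g i).car) (hy : y ∈ (g i).car) :
    cmul g x y = (g i).mul x y := by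
  have h : ∃ i, x ∈ (g i).car ∧ y ∈ (g i).car := ⟨i, hx, hy⟩
  rw [cmul, dif_pos h]
  obtain ⟨hx', hy'⟩ := h.choose_spec
  rcases hch i h.choose with hle | hle
  · exact (hle.2 x hx y hy).symm
  · exact hle.2 x hx' y hy'

theorem cinv_eq {g : ι → PG X} (hch : ∀ i j, (g i).Le (g j) ∨ (g j).Le (g i))
    {x : X} (i : ι) (hx : x ∈ (g i).car) : cinv g x = (g i).inv x := by
  have h : ∃ i, x ∈ (g i).car := ⟨i, hx⟩
  rw [cinv, dif_pos h]
  rcases hch i h.choose with hle | hle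
  · exact (hle.inv_eq hx).symm
  · exact hle.inv_eq h.choose_spec

theorem chain_one_eq {g : ι → PG X} (hch : ∀ i j, (g i).Le (g j) ∨ (g j).Le (g i))
    (i j : ι) : (g i).one = (g j).one := by
  rcases hch i j with hle | hle
  · exact hle.one_eq
  · exact hle.one_eq.symm

theorem chain_mem2 {g : ι → PG X} (hch : ∀ i j, (g i).Le (g j) ∨ (g j).Le (g i))
    {x y : X} (hx : x ∈ ⋃ i, (g i).car) (hy : y ∈ ⋃ i, (g i).car) :
    ∃ i, x ∈ (g i).car ∧ y ∈ (g i).car := by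
  obtain ⟨i, hi⟩ := mem_iUnion.mp hx
  obtain ⟨j, hj⟩ := mem_iUnion.mp hy
  rcases hch i j with hle | hle
  · exact ⟨j, hle.1 hi, hj⟩
  · exact ⟨i, hi, hle.1 hj⟩

/-- Union of a chain of partial groups. -/
noncomputable def chainUnion (g : ι → PG X) (i₀ : ι)
    (hch : ∀ i j, (g i).Le (g j) ∨ (g j).Le (g i)) : PG X where
  car := ⋃ i, (g i).car
  mul := cmul g
  one := (g i₀).one
  inv := cinv g
  one_mem := mem_iUnion.mpr ⟨i₀, (g i₀).one_mem⟩
  mul_mem := fun x hx y hy => by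
    obtain ⟨i, hxi, hyi⟩ := chain_mem2 hch hx hy
    rw [cmul_eq hch i hxi hyi]
    exact mem_iUnion.mpr ⟨i, (g i).mul_mem x hxi y hyi⟩
  inv_mem := fun x hx => by
    obtain ⟨i, hi⟩ := mem_iUnion.mp hx
    rw [cinv_eq hch i hi]
    exact mem_iUnion.mpr ⟨i, (g i).inv_mem x hi⟩
  assoc := fun x hx y hy z hz => by
    obtain ⟨i, hxi, hyi⟩ := chain_mem2 hch hx hy
    obtain ⟨j, hyj, hzj⟩ := chain_mem2 hch hy hz
    rcases hch i j with hle | hle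
    · have hxj := hle.1 hxi
      rw [cmul_eq hch j hxj hyj, cmul_eq hch j ((g j).mul_mem x hxj y hyj) hzj,
        cmul_eq hch j hyj hzj, cmul_eq hch j hxj ((g j).mul_mem y hyj z hzj)]
      exact (g j).assoc x hxj y hyj z hzj
    · have hzi := hle.1 hzj
      rw [cmul_eq hch i hxi hyi, cmul_eq hch i ((g i).mul_mem x hxi y hyi) hzi,
        cmul_eq hch i hyi hzi, cmul_eq hch i hxi ((g i).mul_mem y hyi z hzi)]
      exact (g i).assoc x hxi y hyi z hzi
  one_mul := fun x hx => by
    obtain ⟨i, hi⟩ := mem_iUnion.mp hx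
    rw [chain_one_eq hch i₀ i, cmul_eq hch i (g i).one_mem hi]
    exact (g i).one_mul x hi
  inv_mul := fun x hx => by
    obtain ⟨i, hi⟩ := mem_iUnion.mp hx
    rw [cinv_eq hch i hi, cmul_eq hch i ((g i).inv_mem x hi) hi, (g i).inv_mul x hi]
    exact chain_one_eq hch i i₀

theorem le_chainUnion (g : ι → PG X) (i₀ : ι)
    (hch : ∀ i j, (g i).Le (g j) ∨ (g j).Le (g i)) (i : ι) :
    (g i).Le (chainUnion g i₀ hch) := by
  refine ⟨fun x hx => mem_iUnion.mpr ⟨i, hx⟩, ?_⟩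
  intro x hx y hy
  exact (cmul_eq hch i hx hy).symm

theorem chainUnion_finset_sub (g : ι → PG X) (i₀ : ι)
    (hch : ∀ i j, (g i).Le (g j) ∨ (g j).Le (g i)) (t : Finset X) :
    (t : Set X) ⊆ (⋃ i, (g i).car) → ∃ i, (t : Set X) ⊆ (g i).car := by
  classical
  induction t using Finset.induction_on with
  | empty => exact fun _ => ⟨i₀, by simp⟩
  | @insert a s ha IH =>
    intro hsub
    rw [Finset.coe_insert] at hsub
    obtain ⟨i, hi⟩ := IH ((subset_insert a s).trans hsub)
    obtain ⟨j, hj⟩ := mem_iUnion.mp (hsub (mem_insert a _))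
    rw [Finset.coe_insert]
    rcases hch i j with hle | hle
    · exact ⟨j, insert_subset hj (hi.trans hle.1)⟩
    · exact ⟨i, insert_subset (hle.1 hj) hi⟩

theorem chainUnion_car (g : ι → PG X) (i₀ : ι)
    (hch : ∀ i j, (g i).Le (g j) ∨ (g j).Le (g i)) :
    (chainUnion g i₀ hch).car = ⋃ i, (g i).car := rfl

theorem chainUnion_lf (g : ι → PG X) (i₀ : ι)
    (hch : ∀ i j, (g i).Le (g j) ∨ (g j).Le (g i))
    (hlf : ∀ i, LocallyFiniteGroup ↥(g i).car) :
    LocallyFiniteGroup ↥(chainUnion g i₀ hch).car := by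
  classical
  intro s
  have hsub0 : (Subtype.val '' (s : Set ↥(chainUnion g i₀ hch).car)) ⊆ ⋃ i, (g i).car := by
    rintro x ⟨a, _, rfl⟩
    exact a.2
  obtain ⟨i, hi⟩ := chainUnion_finset_sub g i₀ hch (s.image Subtype.val)
    (by rw [Finset.coe_image]; exact hsub0)
  have hle := le_chainUnion g i₀ hch i
  set j := inclHom hle with hj
  have hjinj : Injective j := inclHom_injective hle
  have hran : (s : Set ↥(chainUnion g i₀ hch).car) ⊆ range j := by
    intro a ha
    have : (a : X) ∈ (g i).car := hi (by
      rw [Finset.coe_image]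
      exact mem_image_of_mem _ ha)
    exact ⟨⟨a.1, this⟩, Subtype.ext rfl⟩
  set t : Set ↥(g i).car := j ⁻¹' (s : Set _) with htdef
  have htfin : t.Finite := Set.Finite.preimage hjinj.injOn s.finite_toSet
  have himg : j '' t = (s : Set _) := image_preimage_eq_of_subset hran
  have hclos : ((Subgroup.closure (s : Set ↥(chainUnion g i₀ hch).car)) : Set _)
      = j '' ((Subgroup.closure t : Subgroup ↥(g i).car) : Set _) := by
    rw [← himg, ← MonoidHom.map_closure, Subgroup.coe_map]
  rw [hclos]
  exact (lf_finite_closure (hlf i) htfin).image _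

section OfInj
variable {G : Type u} [Group G]

/-- Transport of a group structure along an injection into `X`. -/
noncomputable def ofInj (θ : G → X) (hθ : Injective θ) : PG X where
  car := range θ
  mul x y := θ (invFun θ x * invFun θ y)
  one := θ 1
  inv x := θ (invFun θ x)⁻¹
  one_mem := mem_range_self 1
  mul_mem := fun x _ y _ => mem_range_self _
  inv_mem := fun x _ => mem_range_self _
  assoc := by
    have hσ : ∀ a, invFun θ (θ a) = a := leftInverse_invFun hθ
    rintro _ ⟨a, rfl⟩ _ ⟨b, rfl⟩ _ ⟨c, rfl⟩
    simp [hσ, mul_assoc]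
  one_mul := by
    have hσ : ∀ a, invFun θ (θ a) = a := leftInverse_invFun hθ
    rintro _ ⟨a, rfl⟩
    simp [hσ]
  inv_mul := by
    have hσ : ∀ a, invFun θ (θ a) = a := leftInverse_invFun hθ
    rintro _ ⟨a, rfl⟩
    simp [hσ]

theorem ofInj_car (θ : G → X) (hθ : Injective θ) : (ofInj θ hθ).car = range θ := rfl

theorem ofInj_mul (θ : G → X) (hθ : Injective θ) (a b : G) :
    (ofInj θ hθ).mul (θ a) (θ b) = θ (a * b) := by
  have hσ : ∀ a, invFun θ (θ a) = a := leftInverse_invFun hθ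
  simp [ofInj, hσ]

/-- The transported structure is isomorphic to the original group. -/
noncomputable def ofInjEquiv (θ : G → X) (hθ : Injective θ) : G ≃* ↥(ofInj θ hθ).car where
  toFun g := ⟨θ g, mem_range_self g⟩
  invFun x := invFun θ x.1
  left_inv := leftInverse_invFun hθ
  right_inv := fun x => Subtype.ext (by
    obtain ⟨a, ha⟩ := x.2
    show θ (invFun θ (x : X)) = (x : X)
    rw [← ha]
    exact congrArg θ (leftInverse_invFun hθ a))
  map_mul' := fun a b => Subtype.ext (ofInj_mul θ hθ a b).symm

theorem ofInjEquiv_val (θ : G → X) (hθ : Injective θ) (a : G) :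
    ((ofInjEquiv θ hθ a : ↥(ofInj θ hθ).car) : X) = θ a := rfl

theorem ofInj_lf (θ : G → X) (hθ : Injective θ) (hG : LocallyFiniteGroup G) :
    LocallyFiniteGroup ↥(ofInj θ hθ).car :=
  lf_of_equiv (ofInjEquiv θ hθ).symm hG

end OfInj
end PG

namespace Absorb
open PG

variable (μ : Cardinal.{u}) (H : Type u) [Group H] (I : Type u)
  (Gf : I → Type u) [∀ γ, Group (Gf γ)] (e : ∀ γ, H →* Gf γ) (α : I)

/-- An ambient type of cardinality `μ⁺`. -/
def XX : Type u := (Order.succ μ).ord.ToType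

theorem mk_XX : #(XX μ) = Order.succ μ := by rw [XX, mk_toType, card_ord]

theorem room (hμ : ℵ₀ ≤ μ) {s : Set (XX μ)} (hs : #s ≤ μ) : μ ≤ #(↥sᶜ) := by
  by_contra hlt
  have h1 : #(↥sᶜ) ≤ μ := le_of_not_ge hlt
  have h2 : #(XX μ) ≤ μ + μ := by
    rw [← mk_sum_compl s]
    exact add_le_add hs h1
  rw [mk_XX, Cardinal.add_eq_self hμ] at h2
  exact absurd h2 (not_le.mpr (Order.lt_succ μ))


abbrev OO : Type u := μ.ord.ToType

theorem mk_OO : #(OO μ) = μ := (mk_toType μ.ord).trans (card_ord μ)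

section Inner
variable {μ : Cardinal.{u}} {H : Type u} [Group H] {I : Type u}
  {Gf : I → Type u} [∀ γ, Group (Gf γ)] {e : ∀ γ, H →* Gf γ}

/-- Bundled assumptions. -/
def Ass : Prop :=
  ℵ₀ ≤ μ ∧ #I ≤ μ ∧ ∀ γ, LocallyFiniteGroup (Gf γ) ∧ #(Gf γ) = μ ∧ Injective (e γ)

variable (α : I)

noncomputable def emb0 (hA : Ass (μ := μ) (H := H) (Gf := Gf) (e := e)) : Gf α ↪ XX μ :=
  ((Cardinal.le_def (Gf α) (XX μ)).mp
    (by rw [mk_XX, (hA.2.2 α).2.1]; exact Order.le_succ μ)).some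

noncomputable def p0 (hA : Ass (μ := μ) (H := H) (Gf := Gf) (e := e)) : PG (XX μ) :=
  PG.ofInj (emb0 α hA) (emb0 α hA).injective

noncomputable def e0 (hA : Ass (μ := μ) (H := H) (Gf := Gf) (e := e)) :
    H →* ↥(p0 α hA).car :=
  ((PG.ofInjEquiv (emb0 α hA) (emb0 α hA).injective).toMonoidHom).comp (e α)

theorem e0_injective (hA : Ass (μ := μ) (H := H) (Gf := Gf) (e := e)) :
    Injective (e0 α hA) := by
  intro a b hab
  exact (hA.2.2 α).2.2 ((PG.ofInjEquiv (emb0 α hA) (emb0 α hA).injective).injective hab)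

theorem mk_p0 (hA : Ass (μ := μ) (H := H) (Gf := Gf) (e := e)) :
    #↥(p0 α hA).car = μ :=
  (mk_range_eq _ (emb0 α hA).injective).trans (hA.2.2 α).2.1

theorem p0_lf (hA : Ass (μ := μ) (H := H) (Gf := Gf) (e := e)) :
    LocallyFiniteGroup ↥(p0 α hA).car :=
  PG.ofInj_lf _ _ (hA.2.2 α).1

/-- The poset of approximations. -/
def PP (hA : Ass (μ := μ) (H := H) (Gf := Gf) (e := e)) : Type u :=
  {p : PG (XX μ) // (p0 α hA).Le p ∧ LocallyFiniteGroup ↥p.car ∧ #↥p.car ≤ μ}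

noncomputable def p0P (hA : Ass (μ := μ) (H := H) (Gf := Gf) (e := e)) : PP α hA :=
  ⟨p0 α hA, PG.Le.refl _, p0_lf α hA, le_of_eq (mk_p0 α hA)⟩

/-- The copy of `H` in any approximation. -/
noncomputable def eP (hA : Ass (μ := μ) (H := H) (Gf := Gf) (e := e)) {p : PG (XX μ)}
    (hp : (p0 α hA).Le p) : H →* ↥p.car :=
  (PG.inclHom hp).comp (e0 α hA)

theorem eP_val (hA : Ass (μ := μ) (H := H) (Gf := Gf) (e := e)) {p : PG (XX μ)}
    (hp : (p0 α hA).Le p) (hh : H) :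
    ((eP α hA hp hh : ↥p.car) : XX μ) = ((e0 α hA hh : ↥(p0 α hA).car) : XX μ) := rfl

theorem step_lemma (hA : Ass (μ := μ) (H := H) (Gf := Gf) (e := e))
    (c : PP α hA) (β : I) :
    ∃ d : PP α hA, c.1.Le d.1 ∧
      ((∃ j : ↥c.1.car →* Gf β, Injective j ∧
          ∀ hh : H, j (eP α hA c.2.1 hh) = e β hh) →
        ∃ ψ : Gf β →* ↥d.1.car, Injective ψ ∧
          ∀ hh : H, ((ψ (e β hh) : ↥d.1.car) : XX μ)
            = ((e0 α hA hh : ↥(p0 α hA).car) : XX μ)) := by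
  classical
  by_cases hex : ∃ j : ↥c.1.car →* Gf β, Injective j ∧
      ∀ hh : H, j (eP α hA c.2.1 hh) = e β hh
  · obtain ⟨j, hjinj, hjH⟩ := hex
    have hcard : #(Gf β) ≤ #(↥((c.1.car)ᶜ)) := by
      rw [(hA.2.2 β).2.1]
      exact room μ hA.1 c.2.2.2
    obtain ⟨emb⟩ := (Cardinal.le_def _ _).mp hcard
    have key : ∃ θ : Gf β → XX μ, Injective θ ∧ ∀ x : ↥c.1.car, θ (j x) = x.1 := by
      refine ⟨fun g => if hg : ∃ x : ↥c.1.car, j x = g then hg.choose.1 else (emb g).1,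
        ?_, ?_⟩
      · intro g g' heq
        dsimp only at heq
        split_ifs at heq with h1 h2 h2
        · have hcc : h1.choose = h2.choose := Subtype.ext heq
          rw [← h1.choose_spec, ← h2.choose_spec, hcc]
        · have hmem := h1.choose.2
          rw [heq] at hmem
          exact absurd hmem (emb g').2
        · have hmem := h2.choose.2
          rw [← heq] at hmem
          exact absurd hmem (emb g).2
        · exact emb.injective (Subtype.ext heq)
      · intro x
        have h : ∃ y : ↥c.1.car, j y = j x := ⟨x, rfl⟩
        dsimp only
        rw [dif_pos h]
        exact congrArg Subtype.val (hjinj h.choose_spec)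
    obtain ⟨θ, hθinj, hθj⟩ := key
    have hled : c.1.Le (PG.ofInj θ hθinj) := by
      constructor
      · intro x hx
        exact ⟨j ⟨x, hx⟩, hθj ⟨x, hx⟩⟩
      · intro x hx y hy
        have hx' := hθj ⟨x, hx⟩
        have hy' := hθj ⟨y, hy⟩
        calc c.1.mul x y = ((⟨x, hx⟩ * ⟨y, hy⟩ : ↥c.1.car) : XX μ) := rfl
          _ = θ (j (⟨x, hx⟩ * ⟨y, hy⟩)) := (hθj _).symm
          _ = θ (j ⟨x, hx⟩ * j ⟨y, hy⟩) := by rw [map_mul]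
          _ = (PG.ofInj θ hθinj).mul (θ (j ⟨x, hx⟩)) (θ (j ⟨y, hy⟩)) :=
              (PG.ofInj_mul θ hθinj _ _).symm
          _ = (PG.ofInj θ hθinj).mul x y := by rw [hx', hy']
    refine ⟨⟨PG.ofInj θ hθinj, c.2.1.trans hled, PG.ofInj_lf _ _ (hA.2.2 β).1,
      le_of_eq ((mk_range_eq θ hθinj).trans (hA.2.2 β).2.1)⟩, hled, fun _ => ?_⟩
    refine ⟨(PG.ofInjEquiv θ hθinj).toMonoidHom, (PG.ofInjEquiv θ hθinj).injective,
      fun hh => ?_⟩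
    show θ (e β hh) = ((e0 α hA hh : ↥(p0 α hA).car) : XX μ)
    rw [← hjH hh, hθj]
    rfl
  · exact ⟨c, PG.Le.refl _, fun h => absurd h hex⟩

noncomputable def stepC (hA : Ass (μ := μ) (H := H) (Gf := Gf) (e := e))
    (c : PP α hA) (β : I) : PP α hA :=
  (step_lemma α hA c β).choose

theorem stepC_le (hA : Ass (μ := μ) (H := H) (Gf := Gf) (e := e))
    (c : PP α hA) (β : I) : c.1.Le (stepC α hA c β).1 :=
  (step_lemma α hA c β).choose_spec.1

theorem stepC_absorb (hA : Ass (μ := μ) (H := H) (Gf := Gf) (e := e))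
    (c : PP α hA) (β : I)
    (hex : ∃ j : ↥c.1.car →* Gf β, Injective j ∧
      ∀ hh : H, j (eP α hA c.2.1 hh) = e β hh) :
    ∃ ψ : Gf β →* ↥(stepC α hA c β).1.car, Injective ψ ∧
      ∀ hh : H, ((ψ (e β hh) : ↥(stepC α hA c β).1.car) : XX μ)
        = ((e0 α hA hh : ↥(p0 α hA).car) : XX μ) :=
  (step_lemma α hA c β).choose_spec.2 hex

noncomputable def phi [Nonempty I] (hA : Ass (μ := μ) (H := H) (Gf := Gf) (e := e)) :
    OO μ → I :=
  Function.invFun (((Cardinal.le_def I (OO μ)).mp (by rw [mk_OO]; exact hA.2.1)).some)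

theorem phi_surj [Nonempty I] (hA : Ass (μ := μ) (H := H) (Gf := Gf) (e := e)) :
    Surjective (phi hA) := by
  unfold phi
  exact Function.invFun_surjective (Function.Embedding.injective _)

noncomputable def gU (hA : Ass (μ := μ) (H := H) (Gf := Gf) (e := e))
    (i : OO μ) (rec : ∀ j : OO μ, j < i → PP α hA) :
    Option {j : OO μ // j < i} → PG (XX μ) :=
  fun o => o.elim (p0 α hA) (fun j => (rec j.1 j.2).1)

theorem gU_chain (hA : Ass (μ := μ) (H := H) (Gf := Gf) (e := e))
    (i : OO μ) (rec : ∀ j : OO μ, j < i → PP α hA)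
    (h : ∀ (j k : OO μ) (hj : j < i) (hk : k < i), j ≤ k → (rec j hj).1.Le (rec k hk).1) :
    ∀ a b, ((gU α hA i rec) a).Le ((gU α hA i rec) b) ∨
      ((gU α hA i rec) b).Le ((gU α hA i rec) a) := by
  rintro (_ | a) (_ | b)
  · exact Or.inl (PG.Le.refl _)
  · exact Or.inl (rec b.1 b.2).2.1
  · exact Or.inr (rec a.1 a.2).2.1
  · rcases le_total a.1 b.1 with hab | hab
    · exact Or.inl (h a.1 b.1 a.2 b.2 hab)
    · exact Or.inr (h b.1 a.1 b.2 a.2 hab)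

open Classical in
noncomputable def unionF (hA : Ass (μ := μ) (H := H) (Gf := Gf) (e := e))
    (i : OO μ) (rec : ∀ j : OO μ, j < i → PP α hA) : PP α hA :=
  if h : ∀ (j k : OO μ) (hj : j < i) (hk : k < i), j ≤ k → (rec j hj).1.Le (rec k hk).1 then
    ⟨PG.chainUnion (gU α hA i rec) none (gU_chain α hA i rec h), by
      refine ⟨PG.le_chainUnion (gU α hA i rec) none (gU_chain α hA i rec h) none, ?_, ?_⟩
      · refine PG.chainUnion_lf _ none _ ?_
        rintro (_ | j)
        · exact p0_lf α hA
        · exact (rec j.1 j.2).2.2.1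
      · refine le_trans (Cardinal.mk_iUnion_le (fun o => ((gU α hA i rec) o).car)) ?_
        have hb1 : #(Option {j : OO μ // j < i}) ≤ μ := by
          rw [mk_option]
          calc #{j : OO μ // j < i} + 1 ≤ μ + μ := by
                refine add_le_add (le_trans (mk_subtype_le _) ?_) ?_
                · exact le_of_eq (mk_OO μ)
                · exact le_trans one_le_aleph0 hA.1
            _ = μ := Cardinal.add_eq_self hA.1
        have hb2 : ⨆ o : Option {j : OO μ // j < i}, #↥(((gU α hA i rec) o).car) ≤ μ := by
          refine ciSup_le' ?_
          rintro (_ | j)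
          · exact le_of_eq (mk_p0 α hA)
          · exact (rec j.1 j.2).2.2.2
        calc #(Option {j : OO μ // j < i}) * _ ≤ μ * μ := mul_le_mul' hb1 hb2
          _ = μ := Cardinal.mul_eq_self hA.1⟩
  else p0P α hA

theorem unionF_le (hA : Ass (μ := μ) (H := H) (Gf := Gf) (e := e))
    (i : OO μ) (rec : ∀ j : OO μ, j < i → PP α hA)
    (h : ∀ (j k : OO μ) (hj : j < i) (hk : k < i), j ≤ k → (rec j hj).1.Le (rec k hk).1)
    (j : OO μ) (hj : j < i) : (rec j hj).1.Le (unionF α hA i rec).1 := by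
  rw [show unionF α hA i rec = _ from dif_pos h]
  exact PG.le_chainUnion (gU α hA i rec) none (gU_chain α hA i rec h) (some ⟨j, hj⟩)

noncomputable def FF [Nonempty I] (hA : Ass (μ := μ) (H := H) (Gf := Gf) (e := e)) :
    OO μ → PP α hA :=
  (IsWellFounded.wf (α := OO μ) (r := (· < ·))).fix
    (fun i rec => stepC α hA (unionF α hA i rec) (phi hA i))

theorem FF_eq [Nonempty I] (hA : Ass (μ := μ) (H := H) (Gf := Gf) (e := e)) (i : OO μ) :
    FF α hA i = stepC α hA (unionF α hA i (fun j _ => FF α hA j)) (phi hA i) :=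
  WellFounded.fix_eq _ _ i

theorem FF_mono [Nonempty I] (hA : Ass (μ := μ) (H := H) (Gf := Gf) (e := e))
    (i : OO μ) : ∀ j, j < i → (FF α hA j).1.Le (FF α hA i).1 := by
  refine WellFounded.induction (C := fun i => ∀ j, j < i → (FF α hA j).1.Le (FF α hA i).1)
    (IsWellFounded.wf (α := OO μ) (r := (· < ·))) i ?_
  intro i IH j hj
  have hcond : ∀ (j k : OO μ) (hj : j < i) (hk : k < i), j ≤ k →
      (FF α hA j).1.Le (FF α hA k).1 := by
    intro j k hj hk hjk
    rcases eq_or_lt_of_le hjk with rfl | hlt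
    · exact PG.Le.refl _
    · exact IH k hk j hlt
  have h1 : (FF α hA j).1.Le (unionF α hA i (fun j _ => FF α hA j)).1 :=
    unionF_le α hA i (fun j _ => FF α hA j) hcond j hj
  have h2 := stepC_le α hA (unionF α hA i (fun j _ => FF α hA j)) (phi hA i)
  rw [FF_eq α hA i]
  exact h1.trans h2

noncomputable def gK [Nonempty I] (hA : Ass (μ := μ) (H := H) (Gf := Gf) (e := e)) :
    Option (OO μ) → PG (XX μ) :=
  fun o => o.elim (p0 α hA) (fun i => (FF α hA i).1)

theorem gK_chain [Nonempty I] (hA : Ass (μ := μ) (H := H) (Gf := Gf) (e := e)) :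
    ∀ a b, ((gK α hA) a).Le ((gK α hA) b) ∨ ((gK α hA) b).Le ((gK α hA) a) := by
  rintro (_ | a) (_ | b)
  · exact Or.inl (PG.Le.refl _)
  · exact Or.inl (FF α hA b).2.1
  · exact Or.inr (FF α hA a).2.1
  · rcases lt_trichotomy a b with hab | rfl | hab
    · exact Or.inl (FF_mono α hA b a hab)
    · exact Or.inl (PG.Le.refl _)
    · exact Or.inr (FF_mono α hA a b hab)

noncomputable def Ktot [Nonempty I] (hA : Ass (μ := μ) (H := H) (Gf := Gf) (e := e)) :
    PG (XX μ) :=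
  PG.chainUnion (gK α hA) none (gK_chain α hA)

theorem p0_le_Ktot [Nonempty I] (hA : Ass (μ := μ) (H := H) (Gf := Gf) (e := e)) :
    (p0 α hA).Le (Ktot α hA) :=
  PG.le_chainUnion (gK α hA) none (gK_chain α hA) none

theorem FF_le_Ktot [Nonempty I] (hA : Ass (μ := μ) (H := H) (Gf := Gf) (e := e))
    (i : OO μ) : (FF α hA i).1.Le (Ktot α hA) :=
  PG.le_chainUnion (gK α hA) none (gK_chain α hA) (some i)

theorem Ktot_lf [Nonempty I] (hA : Ass (μ := μ) (H := H) (Gf := Gf) (e := e)) :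
    LocallyFiniteGroup ↥(Ktot α hA).car := by
  refine PG.chainUnion_lf _ none _ ?_
  rintro (_ | i)
  · exact p0_lf α hA
  · exact (FF α hA i).2.2.1

theorem mk_Ktot [Nonempty I] (hA : Ass (μ := μ) (H := H) (Gf := Gf) (e := e)) :
    #↥(Ktot α hA).car = μ := by
  refine le_antisymm ?_ ?_
  · refine le_trans (Cardinal.mk_iUnion_le (fun o => ((gK α hA) o).car)) ?_
    have hb1 : #(Option (OO μ)) ≤ μ := by
      rw [mk_option]
      calc #(OO μ) + 1 ≤ μ + μ :=
            add_le_add (le_of_eq (mk_OO μ)) (le_trans one_le_aleph0 hA.1)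
        _ = μ := Cardinal.add_eq_self hA.1
    have hb2 : ⨆ o : Option (OO μ), #↥(((gK α hA) o).car) ≤ μ := by
      refine ciSup_le' ?_
      rintro (_ | i)
      · exact le_of_eq (mk_p0 α hA)
      · exact (FF α hA i).2.2.2
    calc #(Option (OO μ)) * _ ≤ μ * μ := mul_le_mul' hb1 hb2
      _ = μ := Cardinal.mul_eq_self hA.1
  · have := mk_le_of_injective (PG.inclHom_injective (p0_le_Ktot α hA))
    rwa [mk_p0] at this

theorem exists_absorbing [Nonempty I]
    (hA : Ass (μ := μ) (H := H) (Gf := Gf) (e := e)) (α : I) :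
    ∃ (K : Type u) (_ : Group K) (eK : H →* K),
      LocallyFiniteGroup K ∧ #K = μ ∧ Injective eK ∧
      (∃ ψ : Gf α →* K, Injective ψ ∧ ψ.comp (e α) = eK) ∧
      (∀ (β : I) (j : K →* Gf β), Injective j → j.comp eK = e β →
        ∃ h : Gf β →* K, Injective h ∧ h.comp (e β) = eK) := by
  classical
  refine ⟨↥(Ktot α hA).car, inferInstance, eP α hA (p0_le_Ktot α hA), Ktot_lf α hA,
    mk_Ktot α hA, ?_, ?_, ?_⟩
  · intro a b hab
    exact e0_injective α hA (PG.inclHom_injective (p0_le_Ktot α hA) hab)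
  · refine ⟨(PG.inclHom (p0_le_Ktot α hA)).comp
      ((PG.ofInjEquiv (emb0 α hA) (emb0 α hA).injective).toMonoidHom), ?_, ?_⟩
    · intro a b hab
      exact (PG.ofInjEquiv (emb0 α hA) (emb0 α hA).injective).injective
        (PG.inclHom_injective (p0_le_Ktot α hA) hab)
    · refine MonoidHom.ext fun _ => ?_
      rfl
  · intro β j hjinj hjH
    obtain ⟨i, rfl⟩ := phi_surj hA β
    set recf : ∀ k : OO μ, k < i → PP α hA := fun k _ => FF α hA k with hrecf
    set c : PP α hA := unionF α hA i recf with hc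
    have hcFi : c.1.Le (FF α hA i).1 := by
      have h2 := stepC_le α hA c (phi hA i)
      rw [FF_eq α hA i]
      exact h2
    have hcK : c.1.Le (Ktot α hA) := hcFi.trans (FF_le_Ktot α hA i)
    have hincl : ∀ x : ↥c.1.car,
        PG.inclHom hcK x = PG.inclHom hcK x := fun _ => rfl
    have hex : ∃ j' : ↥c.1.car →* Gf (phi hA i), Injective j' ∧
        ∀ hh : H, j' (eP α hA c.2.1 hh) = e (phi hA i) hh := by
      refine ⟨j.comp (PG.inclHom hcK), hjinj.comp (PG.inclHom_injective hcK), ?_⟩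
      intro hh
      have h3 : PG.inclHom hcK (eP α hA c.2.1 hh) = eP α hA (p0_le_Ktot α hA) hh :=
        Subtype.ext rfl
      have h4 := DFunLike.congr_fun hjH hh
      simp only [MonoidHom.comp_apply] at h4 ⊢
      rw [h3]
      exact h4
    obtain ⟨ψ, hψinj, hψH⟩ := stepC_absorb α hA c (phi hA i) hex
    have h5 : (stepC α hA c (phi hA i)).1.Le (Ktot α hA) := by
      have h6 : stepC α hA c (phi hA i) = FF α hA i := (FF_eq α hA i).symm
      rw [h6]
      exact FF_le_Ktot α hA i
    refine ⟨(PG.inclHom h5).comp ψ, (PG.inclHom_injective h5).comp hψinj, ?_⟩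
    refine MonoidHom.ext fun hh => Subtype.ext ?_
    simp only [MonoidHom.comp_apply]
    rw [PG.inclHom_val]
    exact hψH hh

end Inner
end Absorb

theorem cut_amalgam {μ : Cardinal.{u}} (hμ : ℵ₀ ≤ μ) {A B W : Type u}
    [Group A] [Group B] [Group W]
    (hWlf : LocallyFiniteGroup W) (hAc : #A = μ) (hBc : #B ≤ μ)
    (f₁ : A →* W) (f₂ : B →* W) (h₁ : Injective f₁) (h₂ : Injective f₂) :
    ∃ (W' : Type u) (_ : Group W') (g₁ : A →* W') (g₂ : B →* W'),
      LocallyFiniteGroup W' ∧ #W' = μ ∧ Injective g₁ ∧ Injective g₂ ∧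
      ∀ {H : Type u} [Group H] (eA : H →* A) (eB : H →* B),
        f₁.comp eA = f₂.comp eB → g₁.comp eA = g₂.comp eB := by
  set S : Subgroup W := Subgroup.closure (range f₁ ∪ range f₂) with hS
  have hmem1 : ∀ a : A, f₁ a ∈ S := fun a =>
    Subgroup.subset_closure (Or.inl ⟨a, rfl⟩)
  have hmem2 : ∀ b : B, f₂ b ∈ S := fun b =>
    Subgroup.subset_closure (Or.inr ⟨b, rfl⟩)
  set g₁ : A →* ↥S := f₁.codRestrict S hmem1 with hg1
  set g₂ : B →* ↥S := f₂.codRestrict S hmem2 with hg2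
  have hg1inj : Injective g₁ := fun a b hab => h₁ (congrArg Subtype.val hab)
  have hg2inj : Injective g₂ := fun a b hab => h₂ (congrArg Subtype.val hab)
  have hcS : #↥S = μ := by
    refine le_antisymm ?_ ?_
    · refine le_trans (mk_closure_le _) ?_
      refine max_le ?_ hμ
      refine le_trans (Cardinal.mk_union_le _ _) ?_
      calc #↥(range f₁) + #↥(range f₂) ≤ μ + μ := by
            refine add_le_add (le_trans Cardinal.mk_range_le ?_) (le_trans Cardinal.mk_range_le hBc)
            exact le_of_eq hAc
        _ = μ := Cardinal.add_eq_self hμ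
    · rw [← hAc]
      exact mk_le_of_injective hg1inj
  refine ⟨↥S, inferInstance, g₁, g₂, lf_subgroup hWlf S, hcS, hg1inj, hg2inj, ?_⟩
  intro H _ eA eB heq
  refine MonoidHom.ext fun hh => Subtype.ext ?_
  show f₁ (eA hh) = f₂ (eB hh)
  exact DFunLike.congr_fun heq hh


/-- the implication (B) ⇒ (B)⁺ of Theorem 2.6. -/
theorem family_implies_disjoint_family (μ : Cardinal.{u})
    (hsl : μ.IsStrongLimit) (hcof : μ.ord.cof = ℵ₀)
    (H : Type u) [Group H] (hH : LocallyFiniteGroup H)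
    (hHind : GroupIndecomp ℵ₀ H) (hHc : #H < μ)
    (I : Type u) (hI : #I ≤ μ) (Gf : I → Type u) [∀ α, Group (Gf α)]
    (e : ∀ α, H →* Gf α)
    (hfam : ∀ α, LocallyFiniteGroup (Gf α) ∧ #(Gf α) = μ ∧ Function.Injective (e α))
    (hcover : ∀ (G : Type u) (_ : Group G), LocallyFiniteGroup G → #G = μ →
      ∀ eG : H →* G, Function.Injective eG →
        ∃ α, ∃ f : G →* Gf α, Function.Injective f ∧ f.comp eG = e α) :
    ∃ (J : Type u), #J ≤ μ ∧
      ∃ (G' : J → Type u) (_ : ∀ β, Group (G' β)) (e' : ∀ β, H →* G' β),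
        (∀ β, LocallyFiniteGroup (G' β) ∧ #(G' β) = μ ∧ Function.Injective (e' β)) ∧
        -- (b) every locally finite group of cardinality μ extending H embeds into some G'_β over H
        (∀ (G : Type u) (_ : Group G), LocallyFiniteGroup G → #G = μ →
          ∀ eG : H →* G, Function.Injective eG →
            ∃ β, ∃ f : G →* G' β, Function.Injective f ∧ f.comp eG = e' β) ∧
        -- (c) distinct members of the family cannot be amalgamated over H
        (∀ β₁ β₂, β₁ ≠ β₂ →
          ¬ ∃ (G : Type u) (_ : Group G), LocallyFiniteGroup G ∧
            ∃ (f₁ : G' β₁ →* G) (f₂ : G' β₂ →* G),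
              Function.Injective f₁ ∧ Function.Injective f₂ ∧
              f₁.comp (e' β₁) = f₂.comp (e' β₂)) ∧
        -- (d) each pair (G'_β, H) is a universal (μ,<μ)-amalgamation base
        (∀ β, UnivAmalgBase μ H (G' β) (e' β)) := by
  classical
  by_cases hne : Nonempty I
  case neg =>
    refine ⟨I, hI, Gf, inferInstance, e, hfam, ?_, ?_, ?_⟩
    · intro G gG hGlf hGc eG heG
      obtain ⟨γ, hγ⟩ := hcover G gG hGlf hGc eG heG
      exact (hne ⟨γ⟩).elim
    · intro β₁ _ _
      exact (hne ⟨β₁⟩).elim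
    · intro β
      exact (hne ⟨β⟩).elim
  case pos =>
    have hμ : ℵ₀ ≤ μ := hsl.aleph0_le
    have hA : Absorb.Ass (μ := μ) (H := H) (Gf := Gf) (e := e) := ⟨hμ, hI, hfam⟩
    have habs := fun α => Absorb.exists_absorbing hA α
    choose K instK eK hKlf hKcard hKeinj hKψ hKabs using habs
    letI : ∀ α, Group (K α) := instK
    -- each (K α, H) is a universal amalgamation base
    have hbase : ∀ α, ∀ (G' : Type u) (_ : Group G'), LocallyFiniteGroup G' → #G' = μ →
        ∀ g : K α →* G', Function.Injective g →
          ∃ f : G' →* K α, Function.Injective f ∧ f.comp (g.comp (eK α)) = eK α := by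
      intro α G' gG' hG'lf hG'c g hg
      have heG' : Function.Injective (g.comp (eK α)) := hg.comp (hKeinj α)
      obtain ⟨β, f', hf'inj, hf'e⟩ := hcover G' gG' hG'lf hG'c (g.comp (eK α)) heG'
      have hj : (f'.comp g).comp (eK α) = e β := by
        rw [MonoidHom.comp_assoc]
        exact hf'e
      obtain ⟨h, hhinj, hhe⟩ := hKabs α β (f'.comp g) (hf'inj.comp hg) hj
      refine ⟨h.comp f', hhinj.comp hf'inj, ?_⟩
      rw [MonoidHom.comp_assoc, hf'e]
      exact hhe
    -- mutual embeddings from amalgamation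
    have hE : ∀ α α', (∃ (W : Type u) (_ : Group W) (g₁ : K α →* W) (g₂ : K α' →* W),
        LocallyFiniteGroup W ∧ #W = μ ∧ Function.Injective g₁ ∧ Function.Injective g₂ ∧
          g₁.comp (eK α) = g₂.comp (eK α')) →
        ∃ f : K α' →* K α, Function.Injective f ∧ f.comp (eK α') = eK α := by
      rintro α α' ⟨W, gW, g₁, g₂, hWlf, hWc, h1, h2, heq⟩
      obtain ⟨f, hfinj, hfe⟩ := hbase α W gW hWlf hWc g₁ h1
      refine ⟨f.comp g₂, hfinj.comp h2, ?_⟩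
      rw [MonoidHom.comp_assoc, ← heq]
      exact hfe
    set r : I → I → Prop := fun α α' =>
      ∃ (W : Type u) (_ : Group W) (g₁ : K α →* W) (g₂ : K α' →* W),
        LocallyFiniteGroup W ∧ #W = μ ∧ Function.Injective g₁ ∧ Function.Injective g₂ ∧
          g₁.comp (eK α) = g₂.comp (eK α') with hr
    have hrefl : ∀ α, r α α := fun α =>
      ⟨K α, inferInstance, MonoidHom.id _, MonoidHom.id _, hKlf α, hKcard α,
        fun _ _ h => h, fun _ _ h => h, rfl⟩
    have hsymm : ∀ {α α'}, r α α' → r α' α := by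
      rintro α α' ⟨W, gW, g₁, g₂, hWlf, hWc, h1, h2, heq⟩
      exact ⟨W, gW, g₂, g₁, hWlf, hWc, h2, h1, heq.symm⟩
    have htrans : ∀ {a b c}, r a b → r b c → r a c := by
      intro a b c hab hbc
      obtain ⟨f₁, hf₁, hf₁e⟩ := hE a b hab
      obtain ⟨f₂, hf₂, hf₂e⟩ := hE b c hbc
      refine ⟨K a, inferInstance, MonoidHom.id _, f₁.comp f₂, hKlf a, hKcard a,
        fun _ _ h => h, hf₁.comp hf₂, ?_⟩
      rw [MonoidHom.id_comp, MonoidHom.comp_assoc, hf₂e]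
      exact hf₁e.symm
    set s : Setoid I := ⟨r, ⟨hrefl, hsymm, htrans⟩⟩ with hs
    refine ⟨Quotient s, ?_, fun q => K q.out, fun q => instK q.out, fun q => eK q.out,
      fun q => ⟨hKlf q.out, hKcard q.out, hKeinj q.out⟩, ?_, ?_, ?_⟩
    · exact le_trans (mk_le_of_surjective (f := Quotient.mk s) Quotient.exists_rep) hI
    · -- (b)
      intro G gG hGlf hGc eG heG
      obtain ⟨γ, f, hfinj, hfe⟩ := hcover G gG hGlf hGc eG heG
      obtain ⟨ψ, hψinj, hψe⟩ := hKψ γ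
      have hrel : r (Quotient.mk s γ).out γ := Quotient.mk_out γ
      obtain ⟨f2, hf2inj, hf2e⟩ := hE (Quotient.mk s γ).out γ hrel
      refine ⟨Quotient.mk s γ, f2.comp (ψ.comp f), hf2inj.comp (hψinj.comp hfinj), ?_⟩
      rw [MonoidHom.comp_assoc, MonoidHom.comp_assoc, hfe, hψe]
      exact hf2e
    · -- (c)
      rintro β₁ β₂ hne' ⟨W, gW, hWlf, f₁, f₂, h1, h2, heq⟩
      obtain ⟨W', gW', g₁, g₂, hW'lf, hW'c, hg1, hg2, hover⟩ :=
        cut_amalgam hμ hWlf (hKcard β₁.out) (le_of_eq (hKcard β₂.out)) f₁ f₂ h1 h2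
      have : r β₁.out β₂.out := ⟨W', gW', g₁, g₂, hW'lf, hW'c, hg1, hg2,
        hover (eK β₁.out) (eK β₂.out) heq⟩
      exact hne' (Quotient.out_equiv_out.mp this)
    · -- (d)
      intro β
      exact hbase β.out
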